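/- The Kempe ideal K_G = J_G + M_G equals ⟨[I_G]₂⟩ + M_G. -/

import Mathlib

open MvPolynomial

section KempePrelim

variable {V : Type} 

/-- A proper `k`-coloring. -/
def IsColoring (G : SimpleGraph V) (k : ℕ) (f : V → Fin k) : Prop :=
  ∀ ⦃u v : V⦄, G.Adj u v → f u ≠ f v

/-- `g` is obtained from `f` by a Kempe switching: swap colors `i` and `j` on
one connected component of the subgraph induced on `f⁻¹(i) ∪ f⁻¹(j)`. -/
def KempeSwitch (G : SimpleGraph V) {k : ℕ} (f g : V → Fin k) : Prop :=
  ∃ i j : Fin k, ∃ C : Set V,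
    (∃ comp : (G.induce {v | f v = i ∨ f v = j}).ConnectedComponent,
      C = Subtype.val '' comp.supp) ∧
    (∀ v ∈ C, (f v = i → g v = j) ∧ (f v = j → g v = i)) ∧
    (∀ v ∉ C, g v = f v)

/-- A single step of Kempe equivalence between proper `k`-colorings. -/
def KempeStep (G : SimpleGraph V) {k : ℕ} (f g : V → Fin k) : Prop :=
  IsColoring G k f ∧ IsColoring G k g ∧ KempeSwitch G f g

/-- Kempe equivalence of `k`-colorings. -/
def KempeEquiv (G : SimpleGraph V) {k : ℕ} (f g : V → Fin k) : Prop :=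
  Relation.ReflTransGen (KempeStep G) f g

/-- The type of proper `k`-colorings of `G`. -/
def ProperColoring (G : SimpleGraph V) (k : ℕ) : Type _ :=
  {f : V → Fin k // IsColoring G k f}

/-- The number of Kempe classes of `k`-colorings of `G`. -/
noncomputable def Kc (G : SimpleGraph V) (k : ℕ) : ℕ :=
  Nat.card (Quot (fun f g : ProperColoring G k => KempeEquiv G f.1 g.1))

/-- The stable (independent) sets of `G`, as a type indexing variables. -/
def StableSet (G : SimpleGraph V) : Type _ :=
  {s : Finset V // ∀ ⦃i⦄, i ∈ s → ∀ ⦃j⦄, j ∈ s → ¬ G.Adj i j}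

def emptyStable (G : SimpleGraph V) : StableSet G :=
  ⟨∅, by intro i hi; simp at hi⟩

def singleStable (G : SimpleGraph V) (i : V) : StableSet G :=
  ⟨{i}, by
    intro a ha b hb
    simp only [Finset.mem_singleton] at ha hb
    rw [ha, hb]
    exact G.irrefl⟩

def eraseStable (G : SimpleGraph V) [DecidableEq V] (S : StableSet G) (i : V) : StableSet G :=
  ⟨S.1.erase i, fun _ ha _ hb => S.2 (Finset.mem_of_mem_erase ha) (Finset.mem_of_mem_erase hb)⟩

variable (K : Type) [Field K]

/-- The monoid algebra map `x_S ↦ t^{ρ(S)} s`, into `K[t₁,…,t_d,s]`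
(realized as `MvPolynomial (Option V) K`, with `none` playing the role of `s`). -/
noncomputable def piMap (G : SimpleGraph V) :
    MvPolynomial (StableSet G) K →ₐ[K] MvPolynomial (Option V) K :=
  aeval fun S : StableSet G => (∏ i ∈ S.1, X (some i)) * X (none : Option V)

/-- The toric ideal `I_G` of the stable set ring. -/
noncomputable def toricIdeal (G : SimpleGraph V) : Ideal (MvPolynomial (StableSet G) K) :=
  RingHom.ker (piMap K G).toRingHom

/-- The ideal `L_G`. -/
noncomputable def idealL (G : SimpleGraph V) [DecidableEq V] :
    Ideal (MvPolynomial (StableSet G) K) :=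
  Ideal.span {p | ∃ (S : StableSet G) (i : V), i ∈ S.1 ∧ 2 ≤ S.1.card ∧
    p = X (eraseStable G S i) * X (singleStable G i) - X S * X (emptyStable G)}

/-- The 2-coloring ideal `J_G`. -/
noncomputable def idealJ (G : SimpleGraph V) [DecidableEq V] :
    Ideal (MvPolynomial (StableSet G) K) :=
  Ideal.span {p | ∃ S₁ S₂ S₃ S₄ : StableSet G,
    Disjoint S₁.1 S₂.1 ∧ Disjoint S₃.1 S₄.1 ∧ S₁.1 ∪ S₂.1 = S₃.1 ∪ S₄.1 ∧
    p = X S₁ * X S₂ - X S₃ * X S₄}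

/-- The ideal `⟨[I_G]₂⟩` generated by all quadratic binomials of `I_G`. -/
noncomputable def quadPart (G : SimpleGraph V) : Ideal (MvPolynomial (StableSet G) K) :=
  Ideal.span {p | (∃ S₁ S₂ S₃ S₄ : StableSet G, p = X S₁ * X S₂ - X S₃ * X S₄) ∧
    p ∈ toricIdeal K G}

/-- The monomial ideal `M_G`. -/
noncomputable def idealM (G : SimpleGraph V) [DecidableEq V] :
    Ideal (MvPolynomial (StableSet G) K) :=
  Ideal.span {p | ∃ S T : StableSet G, (S.1 ∩ T.1).Nonempty ∧ p = X S * X T}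

/-- The Kempe ideal `K_G = J_G + M_G`. -/
noncomputable def kempeIdeal (G : SimpleGraph V) [DecidableEq V] :
    Ideal (MvPolynomial (StableSet G) K) :=
  idealJ K G + idealM K G

/-- The color class of a proper coloring, as a stable set. -/
def colorClass (G : SimpleGraph V) [Fintype V] [DecidableEq V] {k : ℕ}
    (f : V → Fin k) (hf : IsColoring G k f) (c : Fin k) : StableSet G :=
  ⟨Finset.univ.filter (fun v => f v = c), by
    intro a ha b hb hadj
    simp only [Finset.mem_filter] at ha hb
    exact hf hadj (ha.2.trans hb.2.symm)⟩

/-- The monomial `x_f` associated with a proper `k`-coloring `f`. -/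
noncomputable def xMonomial (G : SimpleGraph V) [Fintype V] [DecidableEq V] {k : ℕ}
    (f : V → Fin k) (hf : IsColoring G k f) : MvPolynomial (StableSet G) K :=
  ∏ c : Fin k, X (colorClass G f hf c)

/-- The Hilbert function `k ↦ dim_K (R/I)_k` of a quotient of `R[G]`. -/
noncomputable def hilbertFn (G : SimpleGraph V)
    (I : Ideal (MvPolynomial (StableSet G) K)) (k : ℕ) : ℕ :=
  Module.finrank K (Submodule.map (Ideal.Quotient.mkₐ K I).toLinearMap
    (homogeneousSubmodule (StableSet G) K k))

end KempePrelim
set_option maxHeartbeats 1000000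
section KempeProof


variable {d : ℕ} (G : SimpleGraph (Fin d)) (K : Type) [Field K]

private lemma prodX_monomial (S : Finset (Fin d)) :
    (∏ i ∈ S, X (some i) : MvPolynomial (Option (Fin d)) K) =
      monomial (∑ i ∈ S, Finsupp.single (some i) 1) 1 := by
  classical
  induction S using Finset.induction with
  | empty => simp [monomial_zero']
  | insert _ _ h ih =>
      rw [Finset.prod_insert h, Finset.sum_insert h, ih, ← pow_one (X (some _)),
        X_pow_eq_monomial, monomial_mul, one_mul]

private lemma sum_single_apply (S : Finset (Fin d)) (v : Fin d) :
    (∑ i ∈ S, Finsupp.single (some i) (1 : ℕ)) (some v) = if v ∈ S then 1 else 0 := by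
  classical
  rw [Finsupp.finset_sum_apply]
  simp [Finsupp.single_apply, Finset.sum_ite_eq' S v (fun _ => 1)]

private lemma count_eq_of_mem_toric (S₁ S₂ S₃ S₄ : StableSet G)
    (h : X S₁ * X S₂ - X S₃ * X S₄ ∈ toricIdeal K G) (v : Fin d) :
    ((if v ∈ S₁.1 then 1 else 0) + (if v ∈ S₂.1 then 1 else 0) : ℕ) =
      (if v ∈ S₃.1 then 1 else 0) + (if v ∈ S₄.1 then 1 else 0) := by
  classical
  have h0 : piMap K G (X S₁ * X S₂) = piMap K G (X S₃ * X S₄) := by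
    rw [toricIdeal, RingHom.mem_ker] at h
    have h' : piMap K G (X S₁ * X S₂ - X S₃ * X S₄) = 0 := h
    rw [map_sub, sub_eq_zero] at h'
    exact h'
  have key : ∀ A B : StableSet G,
      piMap K G (X A * X B) =
        monomial ((∑ i ∈ A.1, Finsupp.single (some i) 1)
          + Finsupp.single (none : Option (Fin d)) 1
          + ((∑ i ∈ B.1, Finsupp.single (some i) 1)
          + Finsupp.single (none : Option (Fin d)) 1)) (1 : K) := by
    intro A B
    rw [map_mul]
    simp only [piMap, aeval_X]
    rw [prodX_monomial, prodX_monomial, ← pow_one (X (none : Option (Fin d))),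
      X_pow_eq_monomial, monomial_mul, monomial_mul, monomial_mul]
    norm_num
  rw [key, key] at h0
  have h1 := ((monomial_eq_monomial_iff _ _ _ _).mp h0).resolve_right (by simp)
  have h2 := congrFun (congrArg (fun f : (Option (Fin d)) →₀ ℕ => (f : Option (Fin d) → ℕ))
    h1.1) (some v)
  simp only [Finsupp.coe_add, Pi.add_apply, sum_single_apply,
    Finsupp.single_apply, reduceCtorEq, if_false] at h2
  omega

private lemma toric_union (S₁ S₂ S₃ S₄ : StableSet G)
    (d12 : Disjoint S₁.1 S₂.1) (d34 : Disjoint S₃.1 S₄.1)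
    (h : X S₁ * X S₂ - X S₃ * X S₄ ∈ toricIdeal K G) :
    S₁.1 ∪ S₂.1 = S₃.1 ∪ S₄.1 := by
  classical
  ext v
  have := count_eq_of_mem_toric G K S₁ S₂ S₃ S₄ h v
  have h12 : ¬ (v ∈ S₁.1 ∧ v ∈ S₂.1) := fun ⟨a, b⟩ =>
    (Finset.disjoint_left.mp d12 a) b
  have h34 : ¬ (v ∈ S₃.1 ∧ v ∈ S₄.1) := fun ⟨a, b⟩ =>
    (Finset.disjoint_left.mp d34 a) b
  simp only [Finset.mem_union]
  by_cases h1 : v ∈ S₁.1 <;> by_cases h2 : v ∈ S₂.1 <;>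
    by_cases h3 : v ∈ S₃.1 <;> by_cases h4 : v ∈ S₄.1 <;>
    simp_all

private lemma toric_not_mixed (S₁ S₂ S₃ S₄ : StableSet G)
    (d12 : Disjoint S₁.1 S₂.1) (h34 : (S₃.1 ∩ S₄.1).Nonempty)
    (h : X S₁ * X S₂ - X S₃ * X S₄ ∈ toricIdeal K G) : False := by
  classical
  obtain ⟨v, hv⟩ := h34
  simp only [Finset.mem_inter] at hv
  have := count_eq_of_mem_toric G K S₁ S₂ S₃ S₄ h v
  have h12 : ¬ (v ∈ S₁.1 ∧ v ∈ S₂.1) := fun ⟨a, b⟩ =>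
    (Finset.disjoint_left.mp d12 a) b
  by_cases h1 : v ∈ S₁.1 <;> by_cases h2 : v ∈ S₂.1 <;> simp_all

private lemma J_mem_toric (S₁ S₂ S₃ S₄ : StableSet G)
    (d12 : Disjoint S₁.1 S₂.1) (d34 : Disjoint S₃.1 S₄.1)
    (hu : S₁.1 ∪ S₂.1 = S₃.1 ∪ S₄.1) :
    X S₁ * X S₂ - X S₃ * X S₄ ∈ toricIdeal K G := by
  classical
  rw [toricIdeal, RingHom.mem_ker]
  show piMap K G _ = 0
  rw [map_sub, sub_eq_zero, map_mul, map_mul]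
  simp only [piMap, aeval_X]
  have e1 : (∏ i ∈ S₁.1, (X (some i) : MvPolynomial (Option (Fin d)) K))
      * ∏ i ∈ S₂.1, X (some i) = ∏ i ∈ S₃.1 ∪ S₄.1, X (some i) := by
    rw [← Finset.prod_union d12, hu]
  have e2 : (∏ i ∈ S₃.1, (X (some i) : MvPolynomial (Option (Fin d)) K))
      * ∏ i ∈ S₄.1, X (some i) = ∏ i ∈ S₃.1 ∪ S₄.1, X (some i) := by
    rw [← Finset.prod_union d34]
  calc _ = ((∏ i ∈ S₁.1, X (some i)) * ∏ i ∈ S₂.1, X (some i))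
        * (X (none : Option (Fin d)) * X none) := by ring
    _ = ((∏ i ∈ S₃.1, X (some i)) * ∏ i ∈ S₄.1, X (some i))
        * (X (none : Option (Fin d)) * X none) := by rw [e1, e2]
    _ = _ := by ring

private lemma memJ {d : ℕ} (G : SimpleGraph (Fin d)) (K : Type) [Field K]
    (S₁ S₂ S₃ S₄ : StableSet G) (d12 : Disjoint S₁.1 S₂.1) (d34 : Disjoint S₃.1 S₄.1)
    (hu : S₁.1 ∪ S₂.1 = S₃.1 ∪ S₄.1) :
    X S₁ * X S₂ - X S₃ * X S₄ ∈ idealJ K G := by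
  rw [idealJ]
  exact Ideal.subset_span ⟨S₁, S₂, S₃, S₄, d12, d34, hu, rfl⟩

end KempeProof

theorem kempeIdeal_eq_quadPart_add_idealM {d : ℕ} (G : SimpleGraph (Fin d))
    (K : Type) [Field K] :
    kempeIdeal K G = quadPart K G + idealM K G := by
  classical
  apply le_antisymm
  · rw [kempeIdeal]
    apply sup_le
    · refine le_trans ?_ le_sup_left
      rw [idealJ, quadPart]
      apply Ideal.span_mono
      rintro p ⟨S₁, S₂, S₃, S₄, d12, d34, hu, rfl⟩
      exact ⟨⟨S₁, S₂, S₃, S₄, rfl⟩, J_mem_toric G K S₁ S₂ S₃ S₄ d12 d34 hu⟩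
    · exact le_sup_right
  · apply sup_le
    · rw [quadPart, Ideal.span_le]
      rintro p ⟨⟨S₁, S₂, S₃, S₄, rfl⟩, hker⟩
      by_cases h12 : (S₁.1 ∩ S₂.1).Nonempty
      · by_cases h34 : (S₃.1 ∩ S₄.1).Nonempty
        · -- both monomials in M
          have m1 : X S₁ * X S₂ ∈ idealM K G := by
            rw [idealM]; exact Ideal.subset_span ⟨S₁, S₂, h12, rfl⟩
          have m2 : X S₃ * X S₄ ∈ idealM K G := by
            rw [idealM]; exact Ideal.subset_span ⟨S₃, S₄, h34, rfl⟩
          exact SetLike.mem_coe.mpr (Ideal.mem_sup_right (sub_mem m1 m2))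
        · exfalso
          have d34 : Disjoint S₃.1 S₄.1 := by
            rw [Finset.disjoint_iff_inter_eq_empty]
            exact Finset.not_nonempty_iff_eq_empty.mp h34
          have : X S₃ * X S₄ - X S₁ * X S₂ ∈ toricIdeal K G := by
            have := neg_mem hker
            simpa using this
          exact toric_not_mixed G K S₃ S₄ S₁ S₂ d34 h12 this
      · have d12 : Disjoint S₁.1 S₂.1 := by
          rw [Finset.disjoint_iff_inter_eq_empty]
          exact Finset.not_nonempty_iff_eq_empty.mp h12
        by_cases h34 : (S₃.1 ∩ S₄.1).Nonempty
        · exact (toric_not_mixed G K S₁ S₂ S₃ S₄ d12 h34 hker).elim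
        · have d34 : Disjoint S₃.1 S₄.1 := by
            rw [Finset.disjoint_iff_inter_eq_empty]
            exact Finset.not_nonempty_iff_eq_empty.mp h34
          have hu := toric_union G K S₁ S₂ S₃ S₄ d12 d34 hker
          exact SetLike.mem_coe.mpr
            (Ideal.mem_sup_left (memJ G K S₁ S₂ S₃ S₄ d12 d34 hu))
    · exact le_sup_right
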